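/- Let p₀ ≥ 5 and q ≥ 17 be integers, let a_{p₀}, a_q be integers with |a_{p₀}| ≤ 2√p₀, |a_q| ≤ 2√q, |a_q| > 9, and p₀ < q. Set d = p₀ + 1 - a_{p₀} and n = 1 - a_{p₀}·a_q - q + q·a_{p₀}. If d divides n, then n/d ≠ -(q - a_q)(1 - a_q); in particular |n/d| < (9/2)·q while |(q-a_q)(1-a_q)| > (9/2)·q. -/
import Mathlib


theorem stmt_17 (p₀ q ap₀ aq : ℤ) (hp₀ : 5 ≤ p₀) (hq : 17 ≤ q) (hpq : p₀ < q)
    (hap₀ : (|ap₀| : ℝ) ≤ 2 * Real.sqrt (p₀ : ℝ))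
    (haq : (|aq| : ℝ) ≤ 2 * Real.sqrt (q : ℝ)) (haq9 : 9 < |aq|)
    (d n : ℤ) (hd : d = p₀ + 1 - ap₀) (hn : n = 1 - ap₀ * aq - q + q * ap₀)
    (hdvd : d ∣ n) :
    n / d ≠ -(q - aq) * (1 - aq) ∧
    2 * |n / d| < 9 * q ∧ 9 * q < 2 * |(q - aq) * (1 - aq)| := by
  have hq0 : (0:ℤ) ≤ q := by linarith
  have hp0 : (0:ℤ) ≤ p₀ := by linarith
  have hq0R : (0:ℝ) ≤ (q:ℝ) := by exact_mod_cast hq0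
  have hp0R : (0:ℝ) ≤ (p₀:ℝ) := by exact_mod_cast hp0
  -- squared bounds in ℤ
  have hq4 : aq ^ 2 ≤ 4 * q := by
    have h1 : ((|aq|:ℤ):ℝ) ^ 2 ≤ (2 * Real.sqrt (q:ℝ)) ^ 2 := by
      apply pow_le_pow_left₀ (by positivity) _ 2
      exact_mod_cast haq
    have h2 : (2 * Real.sqrt (q:ℝ)) ^ 2 = 4 * (q:ℝ) := by
      rw [mul_pow, Real.sq_sqrt hq0R]; ring
    rw [h2] at h1
    have h3 : ((aq ^ 2 : ℤ) : ℝ) ≤ ((4 * q : ℤ) : ℝ) := by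
      push_cast at h1 ⊢
      calc ((aq:ℝ)) ^ 2 = |(aq:ℝ)| ^ 2 := (sq_abs _).symm
        _ ≤ 4 * (q:ℝ) := by exact_mod_cast h1
    exact_mod_cast h3
  have hp4 : ap₀ ^ 2 ≤ 4 * p₀ := by
    have h1 : ((|ap₀|:ℤ):ℝ) ^ 2 ≤ (2 * Real.sqrt (p₀:ℝ)) ^ 2 := by
      apply pow_le_pow_left₀ (by positivity) _ 2
      exact_mod_cast hap₀
    have h2 : (2 * Real.sqrt (p₀:ℝ)) ^ 2 = 4 * (p₀:ℝ) := by
      rw [mul_pow, Real.sq_sqrt hp0R]; ring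
    rw [h2] at h1
    have h3 : ((ap₀ ^ 2 : ℤ) : ℝ) ≤ ((4 * p₀ : ℤ) : ℝ) := by
      push_cast at h1 ⊢
      calc ((ap₀:ℝ)) ^ 2 = |(ap₀:ℝ)| ^ 2 := (sq_abs _).symm
        _ ≤ 4 * (p₀:ℝ) := by exact_mod_cast h1
    exact_mod_cast h3
  have haq10 : 10 ≤ |aq| := haq9
  have habsq : |aq| ^ 2 = aq ^ 2 := sq_abs aq
  have hq25 : 25 ≤ q := by nlinarith [sq_nonneg (|aq| - 10)]
  have haq5 : 5 * |aq| ≤ 2 * q := by nlinarith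
  -- d is positive
  have hA : |ap₀| ^ 2 = ap₀ ^ 2 := sq_abs ap₀
  have hA0 : 0 ≤ |ap₀| := abs_nonneg _
  have hapA : ap₀ ≤ |ap₀| := le_abs_self _
  have hd0 : 0 < d := by nlinarith [sq_nonneg (ap₀ - 4)]
  -- key lemma on d : 45 d ≥ 11 + 14 |ap₀|
  have hkey : 11 + 14 * |ap₀| ≤ 45 * d := by
    have h45 : 0 ≤ (|ap₀| - 4) * (|ap₀| - 5) := by
      rcases le_or_gt (|ap₀|) 4 with h | h
      · have : (|ap₀| - 4) * (|ap₀| - 5) = (4 - |ap₀|) * (5 - |ap₀|) := by ring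
        rw [this]; apply mul_nonneg <;> linarith
      · apply mul_nonneg <;> linarith
    nlinarith
  -- bound |n|
  have hB0 : 0 ≤ |q - aq| := abs_nonneg _
  have hB : 5 * |q - aq| ≤ 7 * q := by
    have := abs_sub_abs_le_abs_sub q aq
    have h2 : |q - aq| ≤ |q| + |aq| := abs_sub _ _
    rw [abs_of_nonneg hq0] at h2
    linarith
  have hnb : |n| ≤ (q - 1) + |ap₀| * |q - aq| := by
    have h1 : n = (1 - q) + ap₀ * (q - aq) := by rw [hn]; ring
    calc |n| ≤ |1 - q| + |ap₀ * (q - aq)| := by rw [h1]; exact abs_add_le _ _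
      _ = (q - 1) + |ap₀| * |q - aq| := by
          rw [abs_mul, abs_of_nonpos (by linarith : (1:ℤ) - q ≤ 0)]; ring
  have hmain : 2 * |n| < 9 * q * d := by
    nlinarith [mul_le_mul hkey hB (by linarith) (by linarith : (0:ℤ) ≤ 45 * d),
      mul_nonneg hA0 hB0, mul_le_mul_of_nonneg_left hB hA0]
  -- n / d
  obtain ⟨k, hk⟩ := hdvd
  have hnd : n / d = k := by rw [hk]; exact Int.mul_ediv_cancel_left k hd0.ne'
  have hkabs : 2 * |k| < 9 * q := by
    have : |n| = d * |k| := by rw [hk, abs_mul, abs_of_pos hd0]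
    rw [this] at hmain
    by_contra h
    push_neg at h
    nlinarith [abs_nonneg k]
  -- product bound
  have hprod : 9 * q < 2 * |(q - aq) * (1 - aq)| := by
    have h1 : 3 * q ≤ 5 * |q - aq| := by
      have := abs_sub_abs_le_abs_sub q aq
      rw [abs_of_nonneg hq0] at this
      linarith
    have h2 : 9 ≤ |1 - aq| := by
      have h3 := abs_sub_abs_le_abs_sub aq (1:ℤ)
      have h4 : |aq - 1| = |1 - aq| := abs_sub_comm _ _
      simp only [abs_one] at h3
      linarith
    rw [abs_mul]
    have hh := mul_le_mul_of_nonneg_left h2 (abs_nonneg (q - aq))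
    linarith
  refine ⟨?_, ?_, hprod⟩
  · intro h
    rw [hnd] at h
    have heq : |k| = |(q - aq) * (1 - aq)| := by rw [h, neg_mul, abs_neg]
    rw [heq] at hkabs
    linarith
  · rw [hnd]; exact hkabs
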